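/- With the same notation, for integers k ≥ 0, l ≥ 1 with k+l+3 < κ one has T↑(k,l)²/μ(k,l+1) + T↓(k,l)²/μ(k+1,l−1) = μ(k,l)·μ(k+1,l)·(μ(k,l) + μ(k+1,l)). -/

import Mathlib

open Real in
lemma sin_trig (x y t : ℝ) :
    sin (x+t) * sin (y+t) * sin (x+y) + sin x * sin (y-t) * sin (x+y+t) =
      sin y * (sin x * sin (x+y) + sin (x+t) * sin (x+y+t)) := by
  simp only [sin_add, cos_add, sin_sub]
  linear_combination (sin x ^ 2 * sin y * cos y + sin x * cos x * sin y ^ 2) *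
    sin_sq_add_cos_sq t

/-- Quantum integer `[n] = sin(nπ/κ)/sin(π/κ)`. -/
noncomputable def qint (κ : ℕ) (n : ℕ) : ℝ :=
  Real.sin (n * Real.pi / κ) / Real.sin (Real.pi / κ)

/-- Quantum dimension `μ(k,l) = [k+1][l+1][k+l+2]/[2]`. -/
noncomputable def quantumDim (κ k l : ℕ) : ℝ :=
  qint κ (k+1) * qint κ (l+1) * qint κ (k+l+2) / qint κ 2

/-- Squared cell modulus of a pointing-up triangle. -/
noncomputable def Tup (κ k l : ℕ) : ℝ :=
  qint κ (k+1) * qint κ (k+2) * qint κ (l+1) * qint κ (l+2) *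
    qint κ (k+l+2) * qint κ (k+l+3) / (qint κ 2)^2

/-- Squared cell modulus of a pointing-down triangle. -/
noncomputable def Tdown (κ k l : ℕ) : ℝ :=
  qint κ (k+1) * qint κ (k+2) * qint κ l * qint κ (l+1) *
    qint κ (k+l+2) * qint κ (k+l+3) / (qint κ 2)^2

set_option maxHeartbeats 2000000 in
theorem typeII_double_deg_Ak (κ k l : ℕ) (hκ : 2 ≤ κ) (hl : 1 ≤ l)
    (h : k + l + 3 < κ) :
    Tup κ k l ^ 2 / quantumDim κ k (l+1) + Tdown κ k l ^ 2 / quantumDim κ (k+1) (l-1) =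
      quantumDim κ k l * quantumDim κ (k+1) l *
        (quantumDim κ k l + quantumDim κ (k+1) l) := by
  have hκ0 : (0:ℝ) < κ := by exact_mod_cast (by omega : 0 < κ)
  have hpos : ∀ n : ℕ, 1 ≤ n → n < κ → 0 < Real.sin (n * Real.pi / κ) := by
    intro n h1 h2
    apply Real.sin_pos_of_pos_of_lt_pi
    · have hn : (0:ℝ) < n := by exact_mod_cast h1
      positivity
    · rw [div_lt_iff₀ hκ0]
      have hn : (n:ℝ) < κ := by exact_mod_cast h2
      nlinarith [Real.pi_pos]
  have hS : Real.sin (Real.pi / κ) ≠ 0 := by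
    have := hpos 1 le_rfl (by omega); rw [Nat.cast_one, one_mul] at this; exact ne_of_gt this
  have hT : Real.sin ((2:ℕ) * Real.pi / κ) ≠ 0 := ne_of_gt (hpos 2 (by omega) (by omega))
  have hA := ne_of_gt (hpos (k+1) (by omega) (by omega))
  have hB := ne_of_gt (hpos (k+2) (by omega) (by omega))
  have hC := ne_of_gt (hpos l hl (by omega))
  have hD := ne_of_gt (hpos (l+1) (by omega) (by omega))
  have hE := ne_of_gt (hpos (l+2) (by omega) (by omega))
  have hF := ne_of_gt (hpos (k+l+2) (by omega) (by omega))
  have hG := ne_of_gt (hpos (k+l+3) (by omega) (by omega))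
  have key : Real.sin (((k:ℝ)+2)*Real.pi/κ) * Real.sin (((l:ℝ)+2)*Real.pi/κ) *
        Real.sin (((k:ℝ)+(l:ℝ)+2)*Real.pi/κ) +
      Real.sin (((k:ℝ)+1)*Real.pi/κ) * Real.sin ((l:ℝ)*Real.pi/κ) *
        Real.sin (((k:ℝ)+(l:ℝ)+3)*Real.pi/κ) =
      Real.sin (((l:ℝ)+1)*Real.pi/κ) *
        (Real.sin (((k:ℝ)+1)*Real.pi/κ) * Real.sin (((k:ℝ)+(l:ℝ)+2)*Real.pi/κ) +
         Real.sin (((k:ℝ)+2)*Real.pi/κ) * Real.sin (((k:ℝ)+(l:ℝ)+3)*Real.pi/κ)) := by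
    have h := sin_trig (((k:ℝ)+1)*Real.pi/κ) (((l:ℝ)+1)*Real.pi/κ) (Real.pi/κ)
    rw [show ((k:ℝ)+1)*Real.pi/κ + ((l:ℝ)+1)*Real.pi/κ = ((k:ℝ)+(l:ℝ)+2)*Real.pi/κ by ring,
        show ((k:ℝ)+1)*Real.pi/κ + Real.pi/κ = ((k:ℝ)+2)*Real.pi/κ by ring,
        show ((l:ℝ)+1)*Real.pi/κ + Real.pi/κ = ((l:ℝ)+2)*Real.pi/κ by ring,
        show ((k:ℝ)+(l:ℝ)+2)*Real.pi/κ + Real.pi/κ = ((k:ℝ)+(l:ℝ)+3)*Real.pi/κ by ring,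
        show ((l:ℝ)+1)*Real.pi/κ - Real.pi/κ = (l:ℝ)*Real.pi/κ by ring] at h
    exact h
  have e1 : l - 1 + 1 = l := Nat.sub_add_cancel hl
  have e2 : k + 1 + (l - 1) + 2 = k + l + 2 := by omega
  simp only [quantumDim, Tup, Tdown, qint, e1, e2]
  push_cast
  push_cast at hA hB hC hD hE hF hG hT
  rw [show ((l:ℝ)+1+1)*Real.pi/κ = ((l:ℝ)+2)*Real.pi/κ by ring,
      show ((k:ℝ)+((l:ℝ)+1)+2)*Real.pi/κ = ((k:ℝ)+(l:ℝ)+3)*Real.pi/κ by ring,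
      show ((k:ℝ)+1+1)*Real.pi/κ = ((k:ℝ)+2)*Real.pi/κ by ring,
      show ((k:ℝ)+1+(l:ℝ)+2)*Real.pi/κ = ((k:ℝ)+(l:ℝ)+3)*Real.pi/κ by ring]
  generalize Real.sin (Real.pi/(κ:ℝ)) = s1 at *
  generalize Real.sin (2*Real.pi/(κ:ℝ)) = s2 at *
  generalize Real.sin (((k:ℝ)+1)*Real.pi/κ) = a at *
  generalize Real.sin (((k:ℝ)+2)*Real.pi/κ) = b at *
  generalize Real.sin ((l:ℝ)*Real.pi/κ) = c at *
  generalize Real.sin (((l:ℝ)+1)*Real.pi/κ) = d at *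
  generalize Real.sin (((l:ℝ)+2)*Real.pi/κ) = e at *
  generalize Real.sin (((k:ℝ)+(l:ℝ)+2)*Real.pi/κ) = f at *
  generalize Real.sin (((k:ℝ)+(l:ℝ)+3)*Real.pi/κ) = g at *
  field_simp
  linear_combination key
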